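/- Let (a_n) be a sequence of non-negative integers with a_1 ≥ 1 such that there is an integer N ≥ 1 with a_{2n} ≥ (1/2)·a_n for all n ≥ N. Let (b_n) be any sequence of integers such that b_1 > (1/2)·a_1, and (1/2)·a_n ≤ b_n ≤ a_n for n < N, and (1/2)·a_n ≤ b_n ≤ a_{2n} for n ≥ N. Then there exist a topological dynamical system (X,T) and a continuous involution ι : X → X commuting with T such that O_T(n) = a_n and O_{T̄}(n) = b_n for all n ≥ 1, where (X̄,T̄) is the halved system. -/

import Mathlib

open Function

/-- `F_T(n)`: the number of points of period `n`, i.e. of `x` with `T^[n] x = x`. -/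
noncomputable def numPer {X : Type*} (T : X → X) (n : ℕ) : ℕ :=
  Nat.card {x : X // T^[n] x = x}

/-- `τ` is a closed orbit of length `n` under `T`: a set of the form
`{x, T x, …, T^[n-1] x}` of cardinality exactly `n` with `T^[n] x = x`. -/
def IsClosedOrbit {X : Type*} (T : X → X) (n : ℕ) (τ : Set X) : Prop :=
  ∃ x : X, T^[n] x = x ∧ τ = {y | ∃ k < n, T^[k] x = y} ∧ τ.ncard = n

/-- `O_T(n)`: the number of closed orbits of length `n` under `T`. -/
noncomputable def numOrb {X : Type*} (T : X → X) (n : ℕ) : ℕ :=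
  Nat.card {τ : Set X // IsClosedOrbit T n τ}

/-- The quotient `X̄` of `X` by the equivalence relation `x ∼ ι x`
(it carries the quotient topology). -/
abbrev HalfQuot {X : Type*} (ι : X → X) : Type _ := Quot (fun x y : X => ι x = y)

/-- The quotient map `π : X → X̄`. -/
abbrev halfProj {X : Type*} (ι : X → X) : X → HalfQuot ι := Quot.mk _

lemma countOrb {X : Type*} (S : X → X) (n : ℕ) (hn : 1 ≤ n) {I : Type*}
    (f : I → ZMod n → X)
    (hinj : ∀ i z i' z', f i z = f i' z' → i = i' ∧ z = z')
    (hstep : ∀ i z, S (f i z) = f i (z + 1))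
    (hsurj : ∀ x, S^[n] x = x → (∀ k, 0 < k → k < n → S^[k] x ≠ x) → ∃ i z, f i z = x) :
    numOrb S n = Nat.card I := by
  haveI : NeZero n := ⟨by omega⟩
  have hcast : ∀ z : ZMod n, ((z.val : ℕ) : ZMod n) = z := fun z => ZMod.natCast_rightInverse z
  have hiter : ∀ (i : I) (z : ZMod n) (k : ℕ), S^[k] (f i z) = f i (z + (k : ZMod n)) := by
    intro i z k
    induction k with
    | zero => simp
    | succ k ih =>
        rw [Function.iterate_succ_apply', ih, hstep]
        congr 1
        push_cast
        ring
  have hfinj : ∀ i : I, Function.Injective (f i) := by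
    intro i z z' h
    exact (hinj i z i z' h).2
  have horb : ∀ i : I, IsClosedOrbit S n (Set.range (f i)) := by
    intro i
    refine ⟨f i 0, ?_, ?_, ?_⟩
    · rw [hiter]; simp
    · ext y
      constructor
      · rintro ⟨z, rfl⟩
        exact ⟨z.val, z.val_lt, by rw [hiter, hcast, zero_add]⟩
      · rintro ⟨k, _, rfl⟩
        rw [hiter]
        exact ⟨_, rfl⟩
    · rw [← Set.image_univ, Set.ncard_image_of_injective _ (hfinj i), Set.ncard_univ,
        Nat.card_zmod]
  set g : I → {τ : Set X // IsClosedOrbit S n τ} := fun i => ⟨Set.range (f i), horb i⟩ with hg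
  have hgbij : Function.Bijective g := by
    constructor
    · intro i i' h
      have : f i 0 ∈ Set.range (f i') := by
        rw [← show (g i' : Set X) = Set.range (f i') from rfl, ← h]
        exact ⟨0, rfl⟩
      obtain ⟨z, hz⟩ := this
      exact ((hinj i' z i 0 hz).1).symm
    · rintro ⟨τ, x, hxn, hτ, hcard⟩
      have hexact : ∀ k, 0 < k → k < n → S^[k] x ≠ x := by
        intro k hk0 hkn hfix
        have hkq : ∀ q : ℕ, S^[k * q] x = x := by
          intro q
          induction q with
          | zero => simp
          | succ q ih => rw [Nat.mul_succ, Function.iterate_add_apply, hfix, ih]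
        have hsub : τ ⊆ (fun s => S^[s] x) '' (Set.Iio k) := by
          rw [hτ]
          rintro y ⟨j, _, rfl⟩
          refine ⟨j % k, Nat.mod_lt _ hk0, ?_⟩
          have hj : j = k * (j / k) + j % k := (Nat.div_add_mod j k).symm
          conv_rhs => rw [hj]
          rw [Nat.add_comm, Function.iterate_add_apply, hkq]
        have h1 : τ.ncard ≤ k := by
          calc τ.ncard ≤ ((fun s => S^[s] x) '' (Set.Iio k)).ncard :=
                Set.ncard_le_ncard hsub ((Set.finite_Iio k).image _)
            _ ≤ (Set.Iio k).ncard := Set.ncard_image_le (Set.finite_Iio k)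
            _ = k := by rw [← Finset.coe_Iio, Set.ncard_coe_finset, Nat.card_Iio]
        omega
      obtain ⟨i, z, hfx⟩ := hsurj x hxn hexact
      refine ⟨i, Subtype.ext ?_⟩
      show Set.range (f i) = τ
      rw [hτ]
      ext y
      constructor
      · rintro ⟨w, rfl⟩
        refine ⟨(w - z).val, (w - z).val_lt, ?_⟩
        rw [← hfx, hiter, hcast]
        congr 1
        ring
      · rintro ⟨k, _, rfl⟩
        rw [← hfx, hiter]
        exact ⟨_, rfl⟩
  rw [numOrb, Nat.card_congr (Equiv.ofBijective g hgbij).symm]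


namespace St12

variable (c p q : ℕ → ℕ)

abbrev Kind (n : ℕ) : Type := Fin (c n) ⊕ (Fin (p n) × Bool) ⊕ Fin (q n)

structure Pt : Type where
  n : ℕ
  k : Kind c p q n
  z : ZMod n

noncomputable instance : DecidableEq (Pt c p q) := Classical.decEq _

variable {c p q}

def Tmap : Pt c p q → Pt c p q := fun x => ⟨x.n, x.k, x.z + 1⟩

def Tinv : Pt c p q → Pt c p q := fun x => ⟨x.n, x.k, x.z - 1⟩

def imap : Pt c p q → Pt c p q
  | ⟨n, .inl j, z⟩ => ⟨n, .inl j, z⟩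
  | ⟨n, .inr (.inl (j, b)), z⟩ => ⟨n, .inr (.inl (j, !b)), z⟩
  | ⟨n, .inr (.inr j), z⟩ => ⟨n, .inr (.inr j), z + (n / 2 : ℕ)⟩

lemma imap_fst (x : Pt c p q) : (imap x).n = x.n := by
  rcases x with ⟨n, (j | ⟨j,b⟩ | j), z⟩ <;> rfl

def TEquiv : Equiv (Pt c p q) (Pt c p q) where
  toFun := Tmap
  invFun := Tinv
  left_inv := fun ⟨n, j, z⟩ => by simp [Tmap, Tinv]; exact add_sub_cancel_right z 1
  right_inv := fun ⟨n, j, z⟩ => by simp [Tmap, Tinv]; exact sub_add_cancel z 1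

section Hyp

variable (hc0 : c 0 = 0) (hp0 : p 0 = 0) (hq0 : q 0 = 0)
  (hq2 : ∀ n, q n ≠ 0 → 2 ∣ n) (hc1 : c 1 ≠ 0)

include hc0 hp0 hq0 in
lemma level_pos (x : Pt c p q) : 1 ≤ x.n := by
  rcases x with ⟨n, (j | ⟨j,b⟩ | j), z⟩ <;>
  · rcases Nat.eq_zero_or_pos n with rfl | h
    · exact absurd j.2 (by omega)
    · exact h
end Hyp

lemma imap_invol (hq2 : ∀ n, q n ≠ 0 → 2 ∣ n) : imap ∘ (imap : Pt c p q → Pt c p q) = id := by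
  funext x
  rcases x with ⟨n, (j | ⟨j,b⟩ | j), z⟩
  · rfl
  · simp [imap]
  · have h2 : 2 ∣ n := hq2 n (by have := j.2; omega)
    simp only [imap, comp_apply, id_eq]
    rw [add_assoc, ← Nat.cast_add, show n / 2 + n / 2 = n from by omega,
      ZMod.natCast_self, add_zero]

lemma imap_comm_T : imap ∘ (Tmap : Pt c p q → Pt c p q) = Tmap ∘ imap := by
  funext x
  rcases x with ⟨n, (j | ⟨j,b⟩ | j), z⟩
  · rfl
  · rfl
  · simp only [comp_apply, Tmap, imap]
    rw [add_right_comm]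
    rfl

lemma Tmap_iterate (k : ℕ) (x : Pt c p q) :
    (Tmap : Pt c p q → Pt c p q)^[k] x = ⟨x.n, x.k, x.z + (k : ZMod x.n)⟩ := by
  induction k with
  | zero => simp
  | succ k ih =>
      rw [Function.iterate_succ_apply', ih]
      simp only [Tmap]
      rw [show ((k + 1 : ℕ) : ZMod x.n) = (k : ZMod x.n) + 1 by push_cast; ring, ← add_assoc]

end St12

namespace St12
variable {c p q : ℕ → ℕ}

noncomputable def rad (x0 : Pt c p q) (x : Pt c p q) : ℝ := if x = x0 then 0 else 1 / x.n

noncomputable def dist' (x0 : Pt c p q) (x y : Pt c p q) : ℝ :=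
  if x = y then 0 else max (rad x0 x) (rad x0 y)

section Met

variable (hc0 : c 0 = 0) (hp0 : p 0 = 0) (hq0 : q 0 = 0) (hc1 : 0 < c 1)

def x0 (hc1 : 0 < c 1) : Pt c p q := ⟨1, .inl ⟨0, hc1⟩, 0⟩

lemma rad_nonneg (y x : Pt c p q) : 0 ≤ rad y x := by
  unfold rad; split <;> positivity

include hc0 hp0 hq0 in
lemma rad_pos_of_ne (y x : Pt c p q) (h : x ≠ y) : 0 < rad y x := by
  have h1 := level_pos hc0 hp0 hq0 x
  unfold rad
  rw [if_neg h]
  have : (0:ℝ) < x.n := by exact_mod_cast h1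
  positivity

noncomputable def metricPt (hc0 : c 0 = 0) (hp0 : p 0 = 0) (hq0 : q 0 = 0) (hc1 : 0 < c 1) :
    MetricSpace (Pt c p q) where
  dist := dist' (x0 hc1)
  dist_self x := by simp [dist']
  dist_comm x y := by
    show dist' (x0 hc1) x y = dist' (x0 hc1) y x
    unfold dist'
    by_cases h : x = y
    · subst h; rfl
    · rw [if_neg h, if_neg (Ne.symm h), max_comm]
  dist_triangle x y z := by
    show dist' (x0 hc1) x z ≤ dist' (x0 hc1) x y + dist' (x0 hc1) y z
    unfold dist'
    have n1 := rad_nonneg (x0 hc1 : Pt c p q) x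
    have n2 := rad_nonneg (x0 hc1 : Pt c p q) y
    have n3 := rad_nonneg (x0 hc1 : Pt c p q) z
    have m1 := le_max_left (rad (x0 hc1) x) (rad (x0 hc1) y)
    have m2 := le_max_right (rad (x0 hc1) y) (rad (x0 hc1) z)
    have m3 : (0:ℝ) ≤ max (rad (x0 hc1) y) (rad (x0 hc1) z) := le_max_of_le_left n2
    have m4 : (0:ℝ) ≤ max (rad (x0 hc1) x) (rad (x0 hc1) y) := le_max_of_le_right n2
    have m5 := le_max_left (rad (x0 hc1) x) (rad (x0 hc1) z)
    have m6 := le_max_right (rad (x0 hc1) x) (rad (x0 hc1) z)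
    have m7 := le_max_right (rad (x0 hc1) x) (rad (x0 hc1) y)
    have m8 := le_max_left (rad (x0 hc1) y) (rad (x0 hc1) z)
    by_cases hxz : x = z <;> by_cases hxy : x = y <;> by_cases hyz : y = z <;>
        subst_vars <;> simp only [if_pos, if_neg, not_false_iff, *] <;>
      first
        | positivity
        | linarith
        | (apply max_le <;> linarith)
  eq_of_dist_eq_zero := by
    intro x y h
    by_cases hxy : x = y
    · exact hxy
    · exfalso
      replace h : dist' (x0 hc1) x y = 0 := h
      unfold dist' at h
      rw [if_neg hxy] at h
      by_cases hx : x = x0 hc1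
      · have hy : y ≠ x0 hc1 := fun hy => hxy (hx.trans hy.symm)
        have := rad_pos_of_ne hc0 hp0 hq0 (x0 hc1) y hy
        have := le_max_right (rad (x0 hc1) x) (rad (x0 hc1) y)
        linarith
      · have := rad_pos_of_ne hc0 hp0 hq0 (x0 hc1) x hx
        have := le_max_left (rad (x0 hc1) x) (rad (x0 hc1) y)
        linarith

end Met
end St12

namespace St12
variable {c p q : ℕ → ℕ}

section Fin2

variable (hc0 : c 0 = 0) (hp0 : p 0 = 0) (hq0 : q 0 = 0)

include hc0 hp0 hq0 in
lemma kind_finite (n : ℕ) : Finite (Kind c p q n × ZMod n) := by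
  rcases Nat.eq_zero_or_pos n with rfl | h
  · haveI : IsEmpty (Kind c p q 0) := by
      constructor
      rintro (j | ⟨j, b⟩ | j) <;> [exact absurd j.2 (by omega);
        exact absurd j.2 (by omega); exact absurd j.2 (by omega)]
    infer_instance
  · haveI : NeZero n := ⟨by omega⟩
    infer_instance

include hc0 hp0 hq0 in
lemma level_finite (M : ℕ) : {x : Pt c p q | x.n ≤ M}.Finite := by
  have h1 : {x : Pt c p q | x.n ≤ M} ⊆ ⋃ n ∈ Finset.range (M + 1), {x : Pt c p q | x.n = n} := by
    intro x hx
    simp only [Set.mem_setOf_eq] at hx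
    simp only [Set.mem_iUnion, Finset.mem_range, Set.mem_setOf_eq]
    exact ⟨x.n, by omega, rfl⟩
  refine Set.Finite.subset (Set.Finite.biUnion (Finset.range (M + 1)).finite_toSet ?_) h1
  intro n _
  have h2 : {x : Pt c p q | x.n = n} ⊆
      (fun kz : Kind c p q n × ZMod n => Pt.mk n kz.1 kz.2) '' Set.univ := by
    rintro ⟨m, k, z⟩ hm
    simp only [Set.mem_setOf_eq] at hm
    subst hm
    exact ⟨(k, z), Set.mem_univ _, rfl⟩
  haveI := kind_finite hc0 hp0 hq0 n
  exact Set.Finite.subset (Set.Finite.image _ (Set.finite_univ)) h2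

end Fin2

section Met2

variable (hc0 : c 0 = 0) (hp0 : p 0 = 0) (hq0 : q 0 = 0) (hc1 : 0 < c 1)

include hc0 hp0 hq0 in
lemma dist_eq_rad :
    letI := metricPt hc0 hp0 hq0 hc1
    ∀ x : Pt c p q, dist x (x0 hc1) = rad (x0 hc1) x := by
  letI := metricPt hc0 hp0 hq0 hc1
  intro x
  show dist' (x0 hc1) x (x0 hc1) = rad (x0 hc1) x
  unfold dist'
  split
  · rename_i h
    rw [h, rad, if_pos rfl]
  · rw [show rad (x0 hc1) (x0 hc1) = 0 from if_pos rfl, max_eq_left (rad_nonneg _ _)]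

include hc0 hp0 hq0 in
lemma compactPt :
    letI := metricPt hc0 hp0 hq0 hc1
    CompactSpace (Pt c p q) := by
  letI := metricPt hc0 hp0 hq0 hc1
  constructor
  apply isCompact_of_finite_subcover
  intro ι U hU hcov
  classical
  obtain ⟨i0, hi0⟩ := Set.mem_iUnion.mp (hcov (Set.mem_univ (x0 hc1)))
  obtain ⟨ε, hε, hball⟩ := Metric.isOpen_iff.mp (hU i0) _ hi0
  have hK : {x : Pt c p q | ε ≤ rad (x0 hc1) x}.Finite := by
    apply (level_finite hc0 hp0 hq0 (Nat.ceil (1 / ε))).subset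
    intro x hx
    simp only [Set.mem_setOf_eq] at hx ⊢
    have hxne : x ≠ x0 hc1 := by
      rintro rfl
      rw [rad, if_pos rfl] at hx
      linarith
    rw [rad, if_neg hxne] at hx
    have h1 := level_pos hc0 hp0 hq0 x
    have hx1 : (0:ℝ) < x.n := by exact_mod_cast h1
    have h2 : (x.n : ℝ) ≤ 1 / ε := by
      rw [le_div_iff₀ hε]
      rw [le_div_iff₀ hx1] at hx
      linarith
    calc x.n ≤ Nat.ceil ((x.n : ℝ)) := by simp
      _ ≤ Nat.ceil (1 / ε) := Nat.ceil_le_ceil h2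
  have hch : ∀ x : Pt c p q, ∃ i, x ∈ U i := fun x => Set.mem_iUnion.mp (hcov (Set.mem_univ x))
  choose ix hix using hch
  refine ⟨insert i0 (hK.toFinset.image ix), fun x _ => ?_⟩
  by_cases hr : ε ≤ rad (x0 hc1) x
  · exact Set.mem_biUnion (Finset.mem_insert_of_mem
      (Finset.mem_image_of_mem ix (hK.mem_toFinset.mpr hr))) (hix x)
  · refine Set.mem_biUnion (Finset.mem_insert_self i0 _) (hball ?_)
    rw [Metric.mem_ball, dist_eq_rad hc0 hp0 hq0 hc1]
    linarith [rad_nonneg (x0 hc1 : Pt c p q) x]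

include hc0 hp0 hq0 in
lemma isometry_of_good (g : Pt c p q → Pt c p q) (hg1 : ∀ x, (g x).n = x.n)
    (hg0 : g (x0 hc1) = x0 hc1) (hginj : Function.Injective g) :
    ∀ x y, dist' (x0 hc1) (g x) (g y) = dist' (x0 hc1) x y := by
  have hg0' : ∀ x, g x = x0 hc1 ↔ x = x0 hc1 := by
    intro x
    constructor
    · intro h; exact hginj (h.trans hg0.symm)
    · rintro rfl; exact hg0
  have hrad : ∀ x, rad (x0 hc1) (g x) = rad (x0 hc1) x := by
    intro x
    unfold rad
    rw [hg1]
    by_cases h : x = x0 hc1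
    · rw [if_pos ((hg0' x).mpr h), if_pos h]
    · rw [if_neg (fun hh => h ((hg0' x).mp hh)), if_neg h]
  intro x y
  unfold dist'
  by_cases h : x = y
  · rw [if_pos h, if_pos (congrArg g h)]
  · rw [if_neg h, if_neg (fun he => h (hginj he)), hrad, hrad]

lemma Tmap_x0 : Tmap (x0 hc1 : Pt c p q) = x0 hc1 := by
  show (⟨1, .inl ⟨0, hc1⟩, (0 : ZMod 1) + 1⟩ : Pt c p q) = ⟨1, .inl ⟨0, hc1⟩, (0 : ZMod 1)⟩
  exact congrArg (Pt.mk 1 (.inl ⟨0, hc1⟩)) (Subsingleton.elim _ _)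

lemma imap_x0 : imap (x0 hc1 : Pt c p q) = x0 hc1 := rfl

end Met2
end St12

namespace St12
variable {c p q : ℕ → ℕ}

section Count

variable (hc0 : c 0 = 0) (hp0 : p 0 = 0) (hq0 : q 0 = 0)

lemma mk_inj {n : ℕ} {k k' : Kind c p q n} {z z' : ZMod n} :
    (Pt.mk n k z = Pt.mk n k' z') ↔ k = k' ∧ z = z' := by
  constructor
  · intro h
    injection h with h1 h2 h3
    exact ⟨h2, h3⟩
  · rintro ⟨rfl, rfl⟩; rfl

include hc0 hp0 hq0 in
lemma periodic_finite (n : ℕ) (hn : 1 ≤ n) :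
    {x : Pt c p q | (Tmap : Pt c p q → Pt c p q)^[n] x = x}.Finite := by
  apply (level_finite hc0 hp0 hq0 n).subset
  intro x hx
  simp only [Set.mem_setOf_eq] at hx ⊢
  rw [Tmap_iterate] at hx
  have hm1 : 1 ≤ x.n := level_pos hc0 hp0 hq0 x
  haveI : NeZero x.n := ⟨by omega⟩
  obtain ⟨m, k, w⟩ := x
  simp only at hm1 ⊢
  rw [mk_inj] at hx
  have h0 : ((n : ℕ) : ZMod m) = 0 := by
    have := hx.2
    rwa [add_eq_left] at this
  have : m ∣ n := (ZMod.natCast_eq_zero_iff n m).mp h0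
  exact Nat.le_of_dvd (by omega) this

include hc0 hp0 hq0 in
lemma count_up (n : ℕ) (hn : 1 ≤ n) :
    numOrb (Tmap : Pt c p q → Pt c p q) n = c n + 2 * p n + q n := by
  haveI : NeZero n := ⟨by omega⟩
  have h := countOrb (Tmap : Pt c p q → Pt c p q) n hn (I := Kind c p q n)
    (fun i z => ⟨n, i, z⟩) ?_ ?_ ?_
  · rw [h]
    simp only [Nat.card_eq_fintype_card, Fintype.card_sum, Fintype.card_prod,
      Fintype.card_fin, Fintype.card_bool]
    ring
  · intro i z i' z' hEq
    exact mk_inj.mp hEq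
  · intro i z; rfl
  · intro x hxfix hmin
    obtain ⟨m, j, w⟩ := x
    have hm1 : 1 ≤ m := level_pos hc0 hp0 hq0 ⟨m, j, w⟩
    haveI : NeZero m := ⟨by omega⟩
    rw [Tmap_iterate] at hxfix
    simp only at hxfix
    rw [mk_inj] at hxfix
    have h0 : ((n : ℕ) : ZMod m) = 0 := by
      have := hxfix.2
      rwa [add_eq_left] at this
    have hdvd : m ∣ n := (ZMod.natCast_eq_zero_iff n m).mp h0
    have hmn : m = n := by
      by_contra hne
      have hlt : m < n := lt_of_le_of_ne (Nat.le_of_dvd (by omega) hdvd) hne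
      apply hmin m (by omega) hlt
      rw [Tmap_iterate]
      simp only
      rw [mk_inj]
      exact ⟨rfl, by rw [ZMod.natCast_self, add_zero]⟩
    subst hmn
    exact ⟨j, w, rfl⟩

end Count
end St12

abbrev HalfQuot' {X : Type*} (ι : X → X) : Type _ := Quot (fun x y : X => ι x = y)
abbrev halfProj' {X : Type*} (ι : X → X) : X → HalfQuot' ι := Quot.mk _

lemma halfProj_eq_iff {X : Type*} {ι : X → X} (h : Function.Involutive ι) (x y : X) :
    halfProj' ι x = halfProj' ι y ↔ x = y ∨ ι x = y := by
  have key : ∀ a b : X, Relation.EqvGen (fun x y : X => ι x = y) a b → a = b ∨ ι a = b := by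
    intro a b hab
    induction hab with
    | rel a b h => exact Or.inr h
    | refl a => exact Or.inl rfl
    | symm a b _ ih =>
        rcases ih with rfl | hh
        · exact Or.inl rfl
        · exact Or.inr (by rw [← hh, h])
    | trans a b d _ _ ih1 ih2 =>
        rcases ih1 with rfl | h1
        · exact ih2
        · rcases ih2 with rfl | h2
          · exact Or.inr h1
          · rw [← h1] at h2
            rw [h a] at h2
            exact Or.inl h2
  constructor
  · intro hxy
    exact key x y (Quot.eq.mp hxy)
  · rintro (rfl | hh)
    · rfl
    · exact Quot.sound hh

namespace St12
variable {c p q : ℕ → ℕ}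

def Tbar (c p q : ℕ → ℕ) : HalfQuot' (imap : Pt c p q → Pt c p q) →
    HalfQuot' (imap : Pt c p q → Pt c p q) :=
  Quot.lift (fun x => halfProj' imap (Tmap x)) (fun a b h => by
    subst h
    have h1 : halfProj' (imap : Pt c p q → Pt c p q) (Tmap a) =
        halfProj' (imap : Pt c p q → Pt c p q) (imap (Tmap a)) := Quot.sound rfl
    have h2 : imap (Tmap a) = Tmap (imap a) :=
      congrFun (imap_comm_T (c := c) (p := p) (q := q)) a
    rw [h2] at h1
    exact h1)

lemma Tbar_mk (x : Pt c p q) : Tbar c p q (halfProj' imap x) = halfProj' imap (Tmap x) := rfl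

lemma Tbar_iterate (k : ℕ) (x : Pt c p q) :
    (Tbar c p q)^[k] (halfProj' imap x) = halfProj' imap (Tmap^[k] x) := by
  induction k with
  | zero => rfl
  | succ k ih => rw [Function.iterate_succ_apply', ih, Function.iterate_succ_apply', Tbar_mk]

/-- The index-to-orbit map downstairs. -/
def fb (c p q : ℕ → ℕ) (n : ℕ) :
    (Fin (c n) ⊕ Fin (p n) ⊕ Fin (q (2 * n))) → ZMod n →
      HalfQuot' (imap : Pt c p q → Pt c p q)
  | .inl j, z => halfProj' imap ⟨n, .inl j, z⟩
  | .inr (.inl j), z => halfProj' imap ⟨n, .inr (.inl (j, false)), z⟩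
  | .inr (.inr j), z => halfProj' imap ⟨2 * n, .inr (.inr j), ((z.val : ℕ) : ZMod (2 * n))⟩

end St12

namespace St12
variable {c p q : ℕ → ℕ}

section CountDown

variable (hc0 : c 0 = 0) (hp0 : p 0 = 0) (hq0 : q 0 = 0)
  (hq2 : ∀ m, q m ≠ 0 → 2 ∣ m)

include hc0 hp0 hq0 hq2 in
lemma count_down (n : ℕ) (hn : 1 ≤ n) :
    numOrb (Tbar c p q) n = c n + p n + q (2 * n) := by
  haveI : NeZero n := ⟨by omega⟩
  haveI : NeZero (2 * n) := ⟨by omega⟩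
  have hinv : Function.Involutive (imap : Pt c p q → Pt c p q) :=
    fun x => congrFun (imap_invol hq2) x
  have hiff := halfProj_eq_iff hinv
  have hval2 : ∀ z : ZMod n, (((z.val : ℕ) : ZMod (2 * n))).val = z.val :=
    fun z => ZMod.val_cast_of_lt (lt_of_lt_of_le z.val_lt (by omega))
  have h22 : (2 * n) / 2 = n := by omega
  have h := countOrb (Tbar c p q) n hn (I := Fin (c n) ⊕ Fin (p n) ⊕ Fin (q (2 * n)))
    (fb c p q n) ?_ ?_ ?_
  · rw [h]
    simp only [Nat.card_eq_fintype_card, Fintype.card_sum, Fintype.card_fin]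
    ring
  -- injectivity
  · intro i z i' z' hE
    have hv1 := z.val_lt
    have hv2 := z'.val_lt
    rcases i with j | j | j <;> rcases i' with j' | j' | j' <;>
        simp only [fb] at hE <;>
        rcases (hiff _ _).mp hE with hE | hE <;>
        (try simp only [imap] at hE)
    -- C-C
    · obtain ⟨hk, hz⟩ := mk_inj.mp hE
      injection hk with hj
      exact ⟨by rw [hj], hz⟩
    · obtain ⟨hk, hz⟩ := mk_inj.mp hE
      injection hk with hj
      exact ⟨by rw [hj], hz⟩
    -- C-P
    · obtain ⟨hk, hz⟩ := mk_inj.mp hE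
      exact absurd hk (by simp)
    · obtain ⟨hk, hz⟩ := mk_inj.mp hE
      exact absurd hk (by simp)
    -- C-D
    · injection hE with h1 h2 h3; omega
    · injection hE with h1 h2 h3; omega
    -- P-C
    · obtain ⟨hk, hz⟩ := mk_inj.mp hE
      exact absurd hk (by simp)
    · obtain ⟨hk, hz⟩ := mk_inj.mp hE
      exact absurd hk (by simp)
    -- P-P
    · obtain ⟨hk, hz⟩ := mk_inj.mp hE
      simp only [Sum.inr.injEq, Sum.inl.injEq, Prod.mk.injEq] at hk
      exact ⟨by rw [hk.1], hz⟩
    · obtain ⟨hk, hz⟩ := mk_inj.mp hE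
      simp only [Bool.not_false, Sum.inr.injEq, Sum.inl.injEq, Prod.mk.injEq] at hk
      exact absurd hk.2 (by simp)
    -- P-D
    · injection hE with h1 h2 h3; omega
    · injection hE with h1 h2 h3; omega
    -- D-C
    · injection hE with h1 h2 h3; omega
    · injection hE with h1 h2 h3; omega
    -- D-P
    · injection hE with h1 h2 h3; omega
    · injection hE with h1 h2 h3; omega
    -- D-D
    · obtain ⟨hk, hz⟩ := mk_inj.mp hE
      simp only [Sum.inr.injEq] at hk
      have h5 := congrArg ZMod.val hz
      rw [hval2, hval2] at h5
      have hzz : z = z' := by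
        calc z = ((z.val : ℕ) : ZMod n) := (ZMod.natCast_rightInverse z).symm
          _ = ((z'.val : ℕ) : ZMod n) := by rw [h5]
          _ = z' := ZMod.natCast_rightInverse z'
      exact ⟨by rw [hk], hzz⟩
    · obtain ⟨hk, hz⟩ := mk_inj.mp hE
      rw [h22] at hz
      have h6 : (((z.val + n : ℕ) : ZMod (2 * n))).val = (((z'.val : ℕ) : ZMod (2 * n))).val := by
        congr 1
        push_cast
        exact hz
      rw [ZMod.val_natCast, ZMod.val_natCast] at h6
      rw [Nat.mod_eq_of_lt (by omega), Nat.mod_eq_of_lt (by omega)] at h6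
      omega
  -- step
  · intro i z
    rcases i with j | j | j
    · rfl
    · rfl
    · have hz1 : ((z.val + 1 : ℕ) : ZMod n) = z + 1 := by
        push_cast
        rw [ZMod.natCast_rightInverse z]
      have hv : (z + 1).val = (z.val + 1) % n := by rw [← hz1, ZMod.val_natCast]
      show halfProj' imap (Tmap ⟨2 * n, .inr (.inr j), ((z.val : ℕ) : ZMod (2 * n))⟩) =
        fb c p q n (.inr (.inr j)) (z + 1)
      by_cases hlt : z.val + 1 < n
      · have hv' : (z + 1).val = z.val + 1 := by rw [hv, Nat.mod_eq_of_lt hlt]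
        apply congrArg
        refine mk_inj.mpr ⟨rfl, ?_⟩
        rw [hv']
        push_cast
        ring
      · have hn1 : z.val + 1 = n := by have := z.val_lt; omega
        have hv0 : (z + 1).val = 0 := by rw [hv, hn1, Nat.mod_self]
        refine (hiff _ _).mpr (Or.inr ?_)
        show imap (Pt.mk (2 * n) (.inr (.inr j)) (((z.val : ℕ) : ZMod (2 * n)) + 1)) = _
        simp only [imap]
        refine mk_inj.mpr ⟨rfl, ?_⟩
        rw [hv0, h22]
        have hch : (((z.val : ℕ) : ZMod (2 * n)) + 1 + ((n : ℕ) : ZMod (2 * n)))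
            = ((z.val + 1 + n : ℕ) : ZMod (2 * n)) := by push_cast; ring
        rw [hch, hn1, show n + n = 2 * n by ring, ZMod.natCast_self]
        simp
  -- surjectivity
  · intro xq hfix hmin
    obtain ⟨x, rfl⟩ := Quot.exists_rep xq
    obtain ⟨m, k, w⟩ := x
    have hm1 : 1 ≤ m := level_pos hc0 hp0 hq0 ⟨m, k, w⟩
    haveI : NeZero m := ⟨by omega⟩
    rw [show (Quot.mk _ (⟨m, k, w⟩ : Pt c p q) : HalfQuot' imap)
      = halfProj' imap ⟨m, k, w⟩ from rfl] at hfix hmin ⊢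
    rw [Tbar_iterate, Tmap_iterate] at hfix
    simp only at hfix
    rcases k with j | ⟨j, b⟩ | j
    · -- C component
      have hdvd : m ∣ n := by
        rcases (hiff _ _).mp hfix with hE | hE <;> (try simp only [imap] at hE) <;>
        · obtain ⟨-, hz⟩ := mk_inj.mp hE
          rw [add_eq_left] at hz
          exact (ZMod.natCast_eq_zero_iff n m).mp hz
      have hmn : m = n := by
        by_contra hne
        have hlt : m < n := lt_of_le_of_ne (Nat.le_of_dvd (by omega) hdvd) hne
        apply hmin m (by omega) hlt
        rw [Tbar_iterate, Tmap_iterate]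
        simp only [ZMod.natCast_self, add_zero]
      subst hmn
      exact ⟨.inl j, w, rfl⟩
    · -- P component
      have hdvd : m ∣ n := by
        rcases (hiff _ _).mp hfix with hE | hE <;> (try simp only [imap] at hE) <;>
          obtain ⟨hk, hz⟩ := mk_inj.mp hE
        · rw [add_eq_left] at hz
          exact (ZMod.natCast_eq_zero_iff n m).mp hz
        · simp only [Bool.not_eq_self, Sum.inr.injEq, Sum.inl.injEq, Prod.mk.injEq] at hk
          exact absurd hk.2 (by simp)
      have hmn : m = n := by
        by_contra hne
        have hlt : m < n := lt_of_le_of_ne (Nat.le_of_dvd (by omega) hdvd) hne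
        apply hmin m (by omega) hlt
        rw [Tbar_iterate, Tmap_iterate]
        simp only [ZMod.natCast_self, add_zero]
      subst hmn
      rcases b with _ | _
      · exact ⟨.inr (.inl j), w, rfl⟩
      · exact ⟨.inr (.inl j), w, Quot.sound rfl⟩
    · -- D component
      have hqm : q m ≠ 0 := by have := j.2; omega
      have h2m : 2 ∣ m := hq2 m hqm
      have hpos : 0 < m / 2 := by omega
      have hper : (Tbar c p q)^[m / 2] (halfProj' imap ⟨m, .inr (.inr j), w⟩)
          = halfProj' imap ⟨m, .inr (.inr j), w⟩ := by
        rw [Tbar_iterate, Tmap_iterate]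
        refine (hiff _ _).mpr (Or.inr ?_)
        simp only [imap]
        refine mk_inj.mpr ⟨rfl, ?_⟩
        rw [add_assoc, ← Nat.cast_add, show m / 2 + m / 2 = m by omega,
          ZMod.natCast_self, add_zero]
      have hnh : n ≤ m / 2 := by
        by_contra hcon
        exact hmin (m / 2) (by omega) (by omega) hper
      have hmeq : m = 2 * n := by
        rcases (hiff _ _).mp hfix with hE | hE <;> (try simp only [imap] at hE) <;>
          obtain ⟨hk, hz⟩ := mk_inj.mp hE
        · rw [add_eq_left] at hz
          have := Nat.le_of_dvd (by omega) ((ZMod.natCast_eq_zero_iff n m).mp hz)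
          omega
        · rw [add_assoc, add_eq_left, ← Nat.cast_add] at hz
          have hd := (ZMod.natCast_eq_zero_iff (n + m / 2) m).mp hz
          have := Nat.le_of_dvd (by omega) hd
          have : n + m / 2 = m := Nat.le_antisymm (by omega) (Nat.le_of_dvd (by omega) hd)
          omega
      subst hmeq
      have hwlt := w.val_lt
      by_cases hwv : w.val < n
      · refine ⟨.inr (.inr j), ((w.val : ℕ) : ZMod n), ?_⟩
        show halfProj' imap ⟨2 * n, .inr (.inr j), _⟩ = _
        apply congrArg
        refine mk_inj.mpr ⟨rfl, ?_⟩
        rw [ZMod.val_cast_of_lt hwv]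
        exact ZMod.natCast_rightInverse w
      · refine ⟨.inr (.inr j), ((w.val - n : ℕ) : ZMod n), ?_⟩
        show halfProj' imap ⟨2 * n, .inr (.inr j), _⟩ = _
        refine (hiff _ _).mpr (Or.inr ?_)
        simp only [imap]
        refine mk_inj.mpr ⟨rfl, ?_⟩
        rw [ZMod.val_cast_of_lt (show w.val - n < n by omega), h22, ← Nat.cast_add,
          show w.val - n + n = w.val by omega]
        exact ZMod.natCast_rightInverse w

end CountDown
end St12

namespace St12

def ddF (a : ℕ → ℕ) (b : ℕ → ℤ) (N : ℕ) (hN : 1 ≤ N) : ℕ → ℕ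
  | n =>
    if h : n < N then 0
    else (b n - ((a n : ℤ) - (if 2 ∣ n then (ddF a b N hN (n / 2) : ℤ) else 0))).toNat
  termination_by n => n
  decreasing_by omega

def DnF (a : ℕ → ℕ) (b : ℕ → ℤ) (N : ℕ) (hN : 1 ≤ N) (n : ℕ) : ℤ :=
  if 2 ∣ n then (ddF a b N hN (n / 2) : ℤ) else 0

lemma ddF_eq (a : ℕ → ℕ) (b : ℕ → ℤ) (N : ℕ) (hN : 1 ≤ N) (n : ℕ) :
    ddF a b N hN n = if n < N then 0
      else (b n - ((a n : ℤ) - DnF a b N hN n)).toNat := by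
  rw [ddF, DnF]
  split_ifs <;> rfl

def AnF (a : ℕ → ℕ) (b : ℕ → ℤ) (N : ℕ) (hN : 1 ≤ N) (n : ℕ) : ℤ :=
  (a n : ℤ) - DnF a b N hN n

def eF (a : ℕ → ℕ) (b : ℕ → ℤ) (N : ℕ) (hN : 1 ≤ N) (n : ℕ) : ℤ :=
  b n - (ddF a b N hN n : ℤ)

def pF (a : ℕ → ℕ) (b : ℕ → ℤ) (N : ℕ) (hN : 1 ≤ N) (n : ℕ) : ℕ :=
  (AnF a b N hN n - eF a b N hN n).toNat

def cF (a : ℕ → ℕ) (b : ℕ → ℤ) (N : ℕ) (hN : 1 ≤ N) (n : ℕ) : ℕ :=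
  (2 * eF a b N hN n - AnF a b N hN n).toNat

end St12

namespace St12
section Arith
variable (a : ℕ → ℕ) (b : ℕ → ℤ) (N : ℕ) (hN : 1 ≤ N)

lemma ddF_small (m : ℕ) (hm : m < N) : ddF a b N hN m = 0 := by
  rw [ddF_eq, if_pos hm]

lemma DnF_nonneg (m : ℕ) : 0 ≤ DnF a b N hN m := by
  rw [DnF]
  split_ifs
  · exact_mod_cast Int.natCast_nonneg _
  · rfl

lemma AnF_le (m : ℕ) : AnF a b N hN m ≤ (a m : ℤ) := by
  have := DnF_nonneg a b N hN m
  rw [AnF]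
  omega

lemma DnF_small (m : ℕ) (hm : m < 2 * N) : DnF a b N hN m = 0 := by
  rw [DnF]
  split_ifs with h2
  · rw [ddF_small a b N hN (m / 2) (by omega)]
    rfl
  · rfl

section Ineq
variable (hbge' : ∀ n : ℕ, N ≤ n → (a n : ℤ) ≤ 2 * b n ∧ (b n : ℤ) ≤ (a (2 * n) : ℤ))

include hbge' in
lemma ddF_le : ∀ m : ℕ, (ddF a b N hN m : ℤ) ≤ (a (2 * m) : ℤ) := by
  intro m
  induction m using Nat.strong_induction_on with
  | _ m ih =>
    by_cases hm : m < N
    · rw [ddF_small a b N hN m hm]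
      exact_mod_cast Int.natCast_nonneg _
    · have hA : 0 ≤ AnF a b N hN m := by
        rw [AnF, DnF]
        by_cases h2 : 2 ∣ m
        · rw [if_pos h2]
          have h3 := ih (m / 2) (by omega)
          rw [show 2 * (m / 2) = m by omega] at h3
          have := Int.natCast_nonneg (a m)
          omega
        · rw [if_neg h2]
          have := Int.natCast_nonneg (a m)
          omega
      have hb2 := (hbge' m (by omega)).2
      rw [ddF_eq, if_neg hm]
      rw [AnF] at hA
      rcases le_or_gt (b m - ((a m : ℤ) - DnF a b N hN m)) 0 with h | h
      · rw [Int.toNat_of_nonpos h]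
        exact_mod_cast Int.natCast_nonneg _
      · rw [Int.toNat_of_nonneg (le_of_lt h)]
        omega

include hbge' in
lemma AnF_nonneg (m : ℕ) (hm : 1 ≤ m) : 0 ≤ AnF a b N hN m := by
  rw [AnF, DnF]
  by_cases h2 : 2 ∣ m
  · rw [if_pos h2]
    have h3 := ddF_le a b N hN hbge' (m / 2)
    rw [show 2 * (m / 2) = m by omega] at h3
    have := Int.natCast_nonneg (a m)
    omega
  · rw [if_neg h2]
    have := Int.natCast_nonneg (a m)
    omega

variable (hblt' : ∀ n : ℕ, 1 ≤ n → n < N → (a n : ℤ) ≤ 2 * b n ∧ (b n : ℤ) ≤ (a n : ℤ))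

include hbge' hblt' in
lemma sandwich (n : ℕ) (h1 : 1 ≤ n) :
    AnF a b N hN n ≤ 2 * eF a b N hN n ∧ eF a b N hN n ≤ AnF a b N hN n := by
  rcases lt_or_ge n N with hn | hn
  · have hdd0 : ddF a b N hN n = 0 := ddF_small a b N hN n hn
    have hAa : AnF a b N hN n = (a n : ℤ) := by
      rw [AnF, DnF_small a b N hN n (by omega)]
      ring
    have hee : eF a b N hN n = b n := by rw [eF, hdd0]; simp
    obtain ⟨u, v⟩ := hblt' n h1 hn
    rw [hAa, hee]
    exact ⟨by omega, v⟩
  · have hA0 := AnF_nonneg a b N hN hbge' n h1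
    have hAle := AnF_le a b N hN n
    obtain ⟨u, v⟩ := hbge' n hn
    have hddn : (ddF a b N hN n : ℤ) = max (b n - AnF a b N hN n) 0 := by
      rw [ddF_eq, if_neg (by omega),
        show (b n - ((a n : ℤ) - DnF a b N hN n)) = b n - AnF a b N hN n by rw [AnF]]
      exact Int.toNat_eq_max _
    have hee : eF a b N hN n = min (b n) (AnF a b N hN n) := by
      rw [eF, hddn]
      rcases le_total (b n) (AnF a b N hN n) with h | h
      · rw [max_eq_right (by omega), min_eq_left h]
        ring
      · rw [max_eq_left (by omega), min_eq_right h]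
        ring
    rw [hee]
    rcases le_total (b n) (AnF a b N hN n) with h | h
    · rw [min_eq_left h]
      exact ⟨by omega, h⟩
    · rw [min_eq_right h]
      exact ⟨by omega, le_refl _⟩

include hbge' hblt' in
lemma cF_eq (n : ℕ) (h1 : 1 ≤ n) :
    (cF a b N hN n : ℤ) = 2 * eF a b N hN n - AnF a b N hN n := by
  obtain ⟨u, v⟩ := sandwich a b N hN hbge' hblt' n h1
  rw [cF, Int.toNat_of_nonneg (by omega)]

include hbge' hblt' in
lemma pF_eq (n : ℕ) (h1 : 1 ≤ n) :
    (pF a b N hN n : ℤ) = AnF a b N hN n - eF a b N hN n := by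
  obtain ⟨u, v⟩ := sandwich a b N hN hbge' hblt' n h1
  rw [pF, Int.toNat_of_nonneg (by omega)]

end Ineq
end Arith
end St12

theorem statement12 (a : ℕ → ℕ) (ha1 : 1 ≤ a 1) (N : ℕ) (hN : 1 ≤ N)
    (haN : ∀ n : ℕ, N ≤ n → (1 / 2 : ℚ) * a n ≤ (a (2 * n) : ℚ))
    (b : ℕ → ℤ) (hb1 : (1 / 2 : ℚ) * a 1 < (b 1 : ℚ))
    (hblt : ∀ n : ℕ, 1 ≤ n → n < N →
      (1 / 2 : ℚ) * a n ≤ (b n : ℚ) ∧ (b n : ℚ) ≤ (a n : ℚ))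
    (hbge : ∀ n : ℕ, N ≤ n →
      (1 / 2 : ℚ) * a n ≤ (b n : ℚ) ∧ (b n : ℚ) ≤ (a (2 * n) : ℚ)) :
    ∃ (X : Type) (_ : MetricSpace X) (_ : CompactSpace X) (T : X ≃ₜ X) (ι : X → X),
      Continuous ι ∧ ι ∘ ι = id ∧ ι ∘ ⇑T = ⇑T ∘ ι ∧ (∃ x : X, T x = x) ∧
      (∀ n : ℕ, 1 ≤ n → {x : X | (⇑T)^[n] x = x}.Finite) ∧
      (∀ n : ℕ, 1 ≤ n → numOrb (⇑T) n = a n) ∧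
      ∃ Tbar : HalfQuot ι → HalfQuot ι,
        (∀ x : X, Tbar (halfProj ι x) = halfProj ι (T x)) ∧
        (∀ n : ℕ, 1 ≤ n → (numOrb Tbar n : ℤ) = b n) := by
  classical
  open St12 in
  -- integer versions of the hypotheses
  have hb1' : (a 1 : ℤ) < 2 * b 1 := by
    have h : (a 1 : ℚ) < 2 * b 1 := by linarith
    exact_mod_cast h
  have hblt' : ∀ n : ℕ, 1 ≤ n → n < N → (a n : ℤ) ≤ 2 * b n ∧ (b n : ℤ) ≤ (a n : ℤ) := by
    intro n h1 h2
    obtain ⟨u, v⟩ := hblt n h1 h2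
    constructor
    · have h : (a n : ℚ) ≤ 2 * b n := by linarith
      exact_mod_cast h
    · exact_mod_cast v
  have hbge' : ∀ n : ℕ, N ≤ n → (a n : ℤ) ≤ 2 * b n ∧ (b n : ℤ) ≤ (a (2 * n) : ℤ) := by
    intro n h1
    obtain ⟨u, v⟩ := hbge n h1
    constructor
    · have h : (a n : ℚ) ≤ 2 * b n := by linarith
      exact_mod_cast h
    · exact_mod_cast v
  have hb_nonneg : ∀ n : ℕ, 1 ≤ n → 0 ≤ b n := by
    intro n h1
    rcases lt_or_ge n N with h | h
    · have := (hblt' n h1 h).1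
      have : (0:ℤ) ≤ (a n : ℤ) := Int.natCast_nonneg _
      omega
    · have := (hbge' n h).1
      have : (0:ℤ) ≤ (a n : ℤ) := Int.natCast_nonneg _
      omega
  -- the orbit-type count functions
  set cc : ℕ → ℕ := (fun n => if n = 0 then 0 else cF a b N hN n) with hcc
  set pp : ℕ → ℕ := (fun n => if n = 0 then 0 else pF a b N hN n) with hpp
  set qq : ℕ → ℕ := (fun n => if 2 ∣ n then ddF a b N hN (n / 2) else 0) with hqq
  have hc0 : cc 0 = 0 := rfl
  have hp0 : pp 0 = 0 := rfl
  have hq0 : qq 0 = 0 := by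
    show (if 2 ∣ 0 then ddF a b N hN (0 / 2) else 0) = 0
    rw [if_pos (dvd_zero 2)]
    exact ddF_small a b N hN 0 (by omega)
  have hq2 : ∀ m, qq m ≠ 0 → 2 ∣ m := by
    intro m hm
    by_contra h2
    apply hm
    show (if 2 ∣ m then ddF a b N hN (m / 2) else 0) = 0
    exact if_neg h2
  have hqq_cast : ∀ n, ((qq n : ℕ) : ℤ) = DnF a b N hN n := by
    intro n
    show ((if 2 ∣ n then ddF a b N hN (n / 2) else 0 : ℕ) : ℤ) = DnF a b N hN n
    rw [DnF]
    split_ifs <;> simp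
  have hcc_cast : ∀ n, 1 ≤ n → ((cc n : ℕ) : ℤ) = (cF a b N hN n : ℤ) := by
    intro n h1
    show (((if n = 0 then 0 else cF a b N hN n) : ℕ) : ℤ) = (cF a b N hN n : ℤ)
    rw [if_neg (show ¬ n = 0 by omega)]
  have hpp_cast : ∀ n, 1 ≤ n → ((pp n : ℕ) : ℤ) = (pF a b N hN n : ℤ) := by
    intro n h1
    show (((if n = 0 then 0 else pF a b N hN n) : ℕ) : ℤ) = (pF a b N hN n : ℤ)
    rw [if_neg (show ¬ n = 0 by omega)]
  have hAnEq : ∀ n, AnF a b N hN n = (a n : ℤ) - DnF a b N hN n := fun n => rfl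
  have heeEq : ∀ n, eF a b N hN n = b n - (ddF a b N hN n : ℤ) := fun n => rfl
  have hcount_a : ∀ n, 1 ≤ n → cc n + 2 * pp n + qq n = a n := by
    intro n h1
    have hcF := cF_eq a b N hN hbge' hblt' n h1
    have hpF := pF_eq a b N hN hbge' hblt' n h1
    have key : ((cc n + 2 * pp n + qq n : ℕ) : ℤ) = (a n : ℤ) := by
      push_cast
      rw [hcc_cast n h1, hpp_cast n h1, hqq_cast n]
      have := hAnEq n
      omega
    exact_mod_cast key
  have hcount_b : ∀ n, 1 ≤ n → ((cc n + pp n + qq (2 * n) : ℕ) : ℤ) = b n := by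
    intro n h1
    have hcF := cF_eq a b N hN hbge' hblt' n h1
    have hpF := pF_eq a b N hN hbge' hblt' n h1
    have hq2n : ((qq (2 * n) : ℕ) : ℤ) = (ddF a b N hN n : ℤ) := by
      show ((if 2 ∣ 2 * n then ddF a b N hN (2 * n / 2) else 0 : ℕ) : ℤ) = _
      rw [if_pos (Dvd.intro n rfl), show 2 * n / 2 = n by omega]
    push_cast
    rw [hcc_cast n h1, hpp_cast n h1, hq2n]
    have := hAnEq n
    have := heeEq n
    omega
  have hc1 : 0 < cc 1 := by
    have hA1 : AnF a b N hN 1 = (a 1 : ℤ) := by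
      rw [hAnEq 1, DnF_small a b N hN 1 (by omega)]
      ring
    have hcF := cF_eq a b N hN hbge' hblt' 1 (le_refl 1)
    have key : (0 : ℤ) < (cF a b N hN 1 : ℤ) := by
      rw [hcF, hA1, heeEq 1]
      rcases lt_or_ge 1 N with hn | hn
      · rw [ddF_small a b N hN 1 hn]
        push_cast
        omega
      · have hN1 : N = 1 := by omega
        have hdd1 : (ddF a b N hN 1 : ℤ) = max (b 1 - (a 1 : ℤ)) 0 := by
          rw [ddF_eq, if_neg (by omega), DnF_small a b N hN 1 (by omega)]
          rw [show (b 1 - ((a 1 : ℤ) - 0)) = b 1 - (a 1 : ℤ) by ring]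
          exact Int.toNat_eq_max _
        rcases le_total (b 1) ((a 1 : ℤ)) with h | h
        · rw [hdd1, max_eq_right (by omega)]
          omega
        · rw [hdd1, max_eq_left (by omega)]
          have ha1' : (1 : ℤ) ≤ (a 1 : ℤ) := by exact_mod_cast ha1
          omega
    have key2 : 0 < cF a b N hN 1 := by exact_mod_cast key
    show 0 < (if (1:ℕ) = 0 then 0 else cF a b N hN 1)
    rw [if_neg one_ne_zero]
    exact key2
  -- assemble the system
  letI instM : MetricSpace (Pt cc pp qq) := metricPt hc0 hp0 hq0 hc1
  haveI instC : CompactSpace (Pt cc pp qq) := compactPt hc0 hp0 hq0 hc1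
  have hinv : Function.Involutive (imap : Pt cc pp qq → Pt cc pp qq) :=
    fun x => congrFun (imap_invol hq2) x
  have hisoT : Isometry (Tmap : Pt cc pp qq → Pt cc pp qq) :=
    Isometry.of_dist_eq (isometry_of_good hc0 hp0 hq0 hc1 Tmap (fun x => rfl)
      (Tmap_x0 hc1) (TEquiv.injective))
  have hTinv_x0 : Tinv (x0 hc1 : Pt cc pp qq) = x0 hc1 := by
    calc Tinv (x0 hc1 : Pt cc pp qq) = Tinv (Tmap (x0 hc1)) := by rw [Tmap_x0 hc1]
      _ = x0 hc1 := TEquiv.left_inv (x0 hc1)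
  have hisoTi : Isometry (Tinv : Pt cc pp qq → Pt cc pp qq) :=
    Isometry.of_dist_eq (isometry_of_good hc0 hp0 hq0 hc1 Tinv (fun x => rfl)
      hTinv_x0 (TEquiv.symm.injective))
  have hisoI : Isometry (imap : Pt cc pp qq → Pt cc pp qq) :=
    Isometry.of_dist_eq (isometry_of_good hc0 hp0 hq0 hc1 imap imap_fst
      (imap_x0 hc1) hinv.injective)
  refine ⟨Pt cc pp qq, instM, instC,
    ⟨TEquiv, hisoT.continuous, hisoTi.continuous⟩, imap,
    hisoI.continuous, imap_invol hq2, imap_comm_T, ⟨x0 hc1, Tmap_x0 hc1⟩,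
    ?_, ?_, St12.Tbar cc pp qq, fun x => rfl, ?_⟩
  · intro n hn
    exact periodic_finite hc0 hp0 hq0 n hn
  · intro n hn
    have h1 := count_up hc0 hp0 hq0 n hn
    show numOrb (Tmap : Pt cc pp qq → Pt cc pp qq) n = a n
    rw [h1, hcount_a n hn]
  · intro n hn
    have h1 := count_down hc0 hp0 hq0 hq2 n hn
    show ((numOrb (St12.Tbar cc pp qq) n : ℕ) : ℤ) = b n
    rw [h1]
    exact hcount_b n hn
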